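/- arXiv:2205.14723 — 6 statements merged into one kernel-verified Lean document; each statement's English description precedes it below -/
import Mathlib

section
/- Let F₁, F₂ : X → ℝ be measurable functions on a finite measure space with ∫ F₁ = ∫ F₂, and suppose there exist constants 0 < λ ≤ Λ such that λ ≤ F₁, F₂ ≤ Λ almost everywhere. Then ∫ F₁ ln(F₁/F₂) ≥ C ‖F₁ - F₂‖_{L²}², where C > 0 depends only on λ and Λ. One may take C = c/Λ where c depends only on Λ/λ. -/
open MeasureTheory

lemma key_pinsker_pt (a b L : ℝ) (ha : 0 < a) (hb : 0 < b) (haL : a ≤ L) (hbL : b ≤ L) :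
    (a - b)^2 / (4*L) ≤ a * Real.log (a/b) - (a - b) := by
  have hL : 0 < L := lt_of_lt_of_le ha haL
  set sa := Real.sqrt a with hsa
  set sb := Real.sqrt b with hsb
  set sL := Real.sqrt L with hsL
  have hsa2 : sa^2 = a := Real.sq_sqrt ha.le
  have hsb2 : sb^2 = b := Real.sq_sqrt hb.le
  have hsL2 : sL^2 = L := Real.sq_sqrt hL.le
  have hsap : 0 < sa := Real.sqrt_pos.mpr ha
  have hsbp : 0 < sb := Real.sqrt_pos.mpr hb
  have hsaL : sa ≤ sL := Real.sqrt_le_sqrt haL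
  have hsbL : sb ≤ sL := Real.sqrt_le_sqrt hbL
  have hlog : Real.log (sb / sa) ≤ sb / sa - 1 :=
    Real.log_le_sub_one_of_pos (by positivity)
  have hlogeq : Real.log (a / b) = 2 * Real.log (sa / sb) := by
    rw [Real.log_div ha.ne' hb.ne', Real.log_div hsap.ne' hsbp.ne',
      hsa, hsb, Real.log_sqrt ha.le, Real.log_sqrt hb.le]
    ring
  have hlogeq2 : Real.log (sa / sb) = - Real.log (sb / sa) := by
    rw [← Real.log_inv]; congr 1; field_simp
  have h1 : 2*a - 2*sa*sb ≤ a * Real.log (a/b) := by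
    rw [hlogeq, hlogeq2]
    have : a * (sb/sa - 1) = sa*sb - a := by
      field_simp
      nlinarith [hsa2]
    nlinarith [mul_le_mul_of_nonneg_left hlog ha.le]
  have h2 : (a - b)^2 ≤ (sa - sb)^2 * (4*L) := by
    have : a - b = (sa - sb) * (sa + sb) := by nlinarith [hsa2, hsb2]
    rw [this]
    have hsum : (sa + sb)^2 ≤ 4*L := by nlinarith
    nlinarith [sq_nonneg (sa - sb), sq_nonneg ((sa-sb)*(sa+sb))]
  rw [div_le_iff₀ (by positivity : (0:ℝ) < 4*L)]
  nlinarith [hsa2, hsb2]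

/-- Pinsker-type inequality for bounded densities with equal masses: if
`λ ≤ F₁, F₂ ≤ Λ` a.e. on a finite measure space and `∫ F₁ = ∫ F₂`, then the
relative entropy `∫ F₁ ln(F₁/F₂)` dominates a constant (depending only on
`λ, Λ`) times `‖F₁ - F₂‖²_{L²}`. -/
theorem stmt_4 (lam Lam : ℝ) (hlam : 0 < lam) (hLam : lam ≤ Lam) :
    ∃ C : ℝ, 0 < C ∧
      ∀ (X : Type) [MeasurableSpace X] (μ : Measure X) [IsFiniteMeasure μ],
        ∀ F₁ F₂ : X → ℝ, Measurable F₁ → Measurable F₂ →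
          (∫ x, F₁ x ∂μ) = (∫ x, F₂ x ∂μ) →
          (∀ᵐ x ∂μ, lam ≤ F₁ x ∧ F₁ x ≤ Lam) →
          (∀ᵐ x ∂μ, lam ≤ F₂ x ∧ F₂ x ≤ Lam) →
          C * ∫ x, (F₁ x - F₂ x) ^ 2 ∂μ ≤ ∫ x, F₁ x * Real.log (F₁ x / F₂ x) ∂μ := by
  have hLpos : 0 < Lam := lt_of_lt_of_le hlam hLam
  refine ⟨1 / (4 * Lam), by positivity, ?_⟩
  intro X _ μ _ F₁ F₂ hF₁ hF₂ hmass h1 h2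
  have hint1 : Integrable F₁ μ := by
    refine Integrable.mono' (integrable_const Lam) hF₁.aestronglyMeasurable ?_
    filter_upwards [h1] with x ⟨hl, hu⟩
    rw [Real.norm_eq_abs, abs_of_pos (lt_of_lt_of_le hlam hl)]; exact hu
  have hint2 : Integrable F₂ μ := by
    refine Integrable.mono' (integrable_const Lam) hF₂.aestronglyMeasurable ?_
    filter_upwards [h2] with x ⟨hl, hu⟩
    rw [Real.norm_eq_abs, abs_of_pos (lt_of_lt_of_le hlam hl)]; exact hu
  have hmeasG : Measurable fun x => F₁ x * Real.log (F₁ x / F₂ x) :=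
    hF₁.mul (Real.measurable_log.comp (hF₁.div hF₂))
  have hintG : Integrable (fun x => F₁ x * Real.log (F₁ x / F₂ x)) μ := by
    refine Integrable.mono' (integrable_const (Lam * Real.log (Lam / lam)))
      hmeasG.aestronglyMeasurable ?_
    filter_upwards [h1, h2] with x ⟨h1l, h1u⟩ ⟨h2l, h2u⟩
    have hx1 : 0 < F₁ x := lt_of_lt_of_le hlam h1l
    have hx2 : 0 < F₂ x := lt_of_lt_of_le hlam h2l
    have hlogabs : |Real.log (F₁ x / F₂ x)| ≤ Real.log (Lam / lam) := by
      rw [abs_le]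
      constructor
      · have hlow : lam / Lam ≤ F₁ x / F₂ x := div_le_div₀ hx1.le h1l hx2 h2u
        have : Real.log (lam / Lam) ≤ Real.log (F₁ x / F₂ x) :=
          (Real.log_le_log_iff (by positivity) (by positivity)).mpr hlow
        have heq : Real.log (lam / Lam) = - Real.log (Lam / lam) := by
          rw [← Real.log_inv]; congr 1; field_simp
        linarith [heq ▸ this]
      · exact (Real.log_le_log_iff (by positivity) (by positivity)).mpr
          (div_le_div₀ hLpos.le h1u hlam h2l)
    rw [Real.norm_eq_abs, abs_mul, abs_of_pos hx1]
    exact mul_le_mul h1u hlogabs (abs_nonneg _) hLpos.le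
  have hmeasH : Measurable fun x => (F₁ x - F₂ x) ^ 2 := (hF₁.sub hF₂).pow_const 2
  have hintH : Integrable (fun x => (F₁ x - F₂ x) ^ 2) μ := by
    refine Integrable.mono' (integrable_const (Lam ^ 2)) hmeasH.aestronglyMeasurable ?_
    filter_upwards [h1, h2] with x ⟨h1l, h1u⟩ ⟨h2l, h2u⟩
    rw [Real.norm_eq_abs, abs_of_nonneg (sq_nonneg (F₁ x - F₂ x))]
    have : |F₁ x - F₂ x| ≤ Lam := by
      rw [abs_le]; constructor <;> nlinarith
    calc (F₁ x - F₂ x)^2 = |F₁ x - F₂ x|^2 := (sq_abs _).symm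
      _ ≤ Lam ^ 2 := by nlinarith [abs_nonneg (F₁ x - F₂ x)]
  -- main comparison
  have hmono : ∫ x, (1 / (4*Lam)) * (F₁ x - F₂ x)^2 ∂μ ≤
      ∫ x, (F₁ x * Real.log (F₁ x / F₂ x) - (F₁ x - F₂ x)) ∂μ := by
    refine integral_mono_ae (hintH.const_mul _) (hintG.sub (hint1.sub hint2) : Integrable (fun x => F₁ x * Real.log (F₁ x / F₂ x) - (F₁ x - F₂ x)) μ) ?_
    filter_upwards [h1, h2] with x ⟨h1l, h1u⟩ ⟨h2l, h2u⟩
    have := key_pinsker_pt (F₁ x) (F₂ x) Lam (lt_of_lt_of_le hlam h1l)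
      (lt_of_lt_of_le hlam h2l) h1u h2u
    have heq : (1 / (4*Lam)) * (F₁ x - F₂ x)^2 = (F₁ x - F₂ x)^2 / (4*Lam) := by ring
    rw [heq]; exact this
  have hsub : Integrable (fun x => F₁ x - F₂ x) μ := hint1.sub hint2
  rw [integral_sub hintG hsub, integral_sub hint1 hint2, integral_const_mul] at hmono
  linarith
end

section
/- Suppose f : 𝕋 × [0,∞) → (0,∞) is a positive C¹ solution of ∂_t f = 𝓗f·∂_x f - f·(-Δ)^{1/2} f, where the fractional Laplacian is defined pointwise and continuous. Then for any 0 ≤ t₁ ≤ t₂, min_x f(x,t₁) ≤ min_x f(x,t₂) and max_x f(x,t₂) ≤ max_x f(x,t₁). -/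
/-- The periodic Hilbert transform, written via the symmetrized principal-value
formula `𝓗g(x) = (1/π) ∫₀^π (g(x-y) - g(x+y)) / (2 tan(y/2)) dy`. -/
noncomputable def pHilbert (g : ℝ → ℝ) (x : ℝ) : ℝ :=
  (1 / Real.pi) * ∫ y in (0:ℝ)..Real.pi, (g (x - y) - g (x + y)) / (2 * Real.tan (y / 2))

/-- The half-Laplacian on the torus, via the symmetrized principal-value formula
`(-Δ)^{1/2}g(x) = (1/π) ∫₀^π (2g(x) - g(x-y) - g(x+y)) / (4 sin²(y/2)) dy`. -/
noncomputable def halfLap (g : ℝ → ℝ) (x : ℝ) : ℝ :=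
  (1 / Real.pi) * ∫ y in (0:ℝ)..Real.pi,
    (2 * g x - g (x - y) - g (x + y)) / (4 * Real.sin (y / 2) ^ 2)

open Set Filter Topology

/-- Abstract parabolic maximum principle on the circle. -/
lemma maxPrinciple (g g' : ℝ → ℝ → ℝ)
    (hper : ∀ t, Function.Periodic (fun x => g x t) (2 * Real.pi))
    (hcont : Continuous fun p : ℝ × ℝ => g p.1 p.2)
    (hg'cont : Continuous fun p : ℝ × ℝ => g' p.1 p.2)
    (hderiv : ∀ x t, HasDerivAt (fun s => g x s) (g' x t) t)
    (hmax : ∀ t, 0 ≤ t → ∀ x, (∀ y, g y t ≤ g x t) → g' x t ≤ 0) :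
    ∀ t₁ t₂ : ℝ, 0 ≤ t₁ → t₁ ≤ t₂ →
      sSup (Set.range fun x => g x t₂) ≤ sSup (Set.range fun x => g x t₁) := by
  have h2pi : (0:ℝ) < 2 * Real.pi := Real.two_pi_pos
  set c := 2 * Real.pi with hc
  -- periodicity of g'
  have hper' : ∀ t, Function.Periodic (fun x => g' x t) c := by
    intro t x
    have h1 : (fun s => g (x + c) s) = fun s => g x s := by
      funext s; exact hper s x
    have h2 := hderiv (x + c) t
    rw [h1] at h2
    exact h2.unique (hderiv x t)
  -- reduction into the fundamental domain
  have hred : ∀ x : ℝ, ∃ z ∈ Icc (0:ℝ) c, (∀ t, g z t = g x t) ∧ (∀ t, g' z t = g' x t) := by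
    intro x
    refine ⟨toIcoMod h2pi 0 x, Ico_subset_Icc_self (by simpa using toIcoMod_mem_Ico' h2pi x),
      ?_, ?_⟩ <;> intro t
    · have := (hper t).sub_zsmul_eq (x := x) (toIcoDiv h2pi 0 x)
      simpa only [toIcoMod] using this
    · have := (hper' t).sub_zsmul_eq (x := x) (toIcoDiv h2pi 0 x)
      simpa only [toIcoMod] using this
  set M : ℝ → ℝ := fun t => sSup (Set.range fun x => g x t) with hM
  -- max attained in the fundamental domain
  have key : ∀ t : ℝ, ∃ x ∈ Icc (0:ℝ) c, (∀ y, g y t ≤ g x t) ∧ M t = g x t := by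
    intro t
    have hconts : Continuous fun x => g x t :=
      hcont.comp (continuous_id.prodMk continuous_const)
    obtain ⟨x, hxmem, hxmax⟩ := isCompact_Icc.exists_isMaxOn
      (nonempty_Icc.2 h2pi.le) hconts.continuousOn
    have hall : ∀ y, g y t ≤ g x t := by
      intro y
      obtain ⟨z, hz, hgz, -⟩ := hred y
      rw [← hgz t]
      exact hxmax hz
    refine ⟨x, hxmem, hall, le_antisymm (csSup_le (range_nonempty _) ?_)
      (le_csSup ⟨g x t, ?_⟩ (mem_range_self x))⟩
    · rintro _ ⟨y, rfl⟩; exact hall y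
    · rintro _ ⟨y, rfl⟩; exact hall y
  -- uniform bound on g' over time intervals
  have bound : ∀ a b : ℝ, ∃ C : ℝ, 0 ≤ C ∧ ∀ x : ℝ, ∀ s ∈ Icc a b, |g' x s| ≤ C := by
    intro a b
    obtain ⟨C, hC⟩ := (isCompact_Icc.prod isCompact_Icc).exists_bound_of_continuousOn
      (f := fun p : ℝ × ℝ => g' p.1 p.2) hg'cont.continuousOn
    refine ⟨max C 0, le_max_right _ _, fun x s hs => ?_⟩
    obtain ⟨z, hz, -, hg'z⟩ := hred x
    rw [← hg'z s]
    calc |g' z s| ≤ C := by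
          simpa [Real.norm_eq_abs] using hC (z, s) (Set.mk_mem_prod hz hs)
      _ ≤ max C 0 := le_max_left _ _
  -- Lipschitz bound in time
  have lip : ∀ (C a b : ℝ), (∀ x : ℝ, ∀ s ∈ Icc a b, |g' x s| ≤ C) →
      ∀ (x : ℝ), ∀ s ∈ Icc a b, ∀ t ∈ Icc a b, |g x t - g x s| ≤ C * |t - s| := by
    intro C a b hC x s hs t ht
    have := Convex.norm_image_sub_le_of_norm_hasDerivWithin_le
      (f := fun u => g x u) (f' := fun u => g' x u) (s := Icc a b)
      (fun u hu => (hderiv x u).hasDerivWithinAt)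
      (fun u hu => by simpa [Real.norm_eq_abs] using hC x u hu)
      (convex_Icc a b) hs ht
    simpa [Real.norm_eq_abs] using this
  -- Lipschitz bound for M
  have Mlip : ∀ (C a b : ℝ), (∀ x : ℝ, ∀ s ∈ Icc a b, |g' x s| ≤ C) →
      ∀ s ∈ Icc a b, ∀ t ∈ Icc a b, M t - M s ≤ C * |t - s| := by
    intro C a b hC s hs t ht
    obtain ⟨x, -, hxall, hxeq⟩ := key t
    obtain ⟨x', -, hx'all, hx'eq⟩ := key s
    have h2 : g x s ≤ M s := hx'eq ▸ hx'all x
    have h3 := (abs_le.1 (lip C a b hC x s hs t ht)).2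
    rw [hxeq]
    linarith
  -- continuity of M
  have Mcont : ∀ a b : ℝ, ContinuousOn M (Icc a b) := by
    intro a b
    obtain ⟨C, hC0, hC⟩ := bound a b
    refine LipschitzOnWith.continuousOn (K := Real.toNNReal C)
      (LipschitzOnWith.of_dist_le_mul fun s hs t ht => ?_)
    rw [Real.dist_eq, Real.dist_eq, Real.coe_toNNReal C hC0, abs_le]
    constructor
    · have := Mlip C a b hC s hs t ht
      rw [abs_sub_comm] at this
      linarith
    · have := Mlip C a b hC t ht s hs
      linarith
  -- main argument
  intro t₁ t₂ ht₁ ht₁₂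
  have main : ∀ u ∈ Icc t₁ t₂, M u ≤ M t₁ := by
    apply image_le_of_liminf_slope_right_le_deriv_boundary (B := fun _ => M t₁)
      (B' := fun _ => 0) (Mcont t₁ t₂) le_rfl continuousOn_const
      (fun u _ => hasDerivWithinAt_const u _ (M t₁))
    intro u hu r hr
    have hu0 : (0:ℝ) ≤ u := ht₁.trans hu.1
    -- Step 1: near a maximum point, the time derivative is < r
    obtain ⟨δ, hδ, hkey⟩ : ∃ δ > 0, ∀ x ∈ Icc (0:ℝ) c, ∀ s ∈ Icc u (u + δ),
        M u - δ ≤ g x u → g' x s < r := by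
      by_contra hcon
      push_neg at hcon
      choose X hX S hS hgX hg'S using fun n : ℕ =>
        hcon (1/(n+1)) (by positivity)
      obtain ⟨xb, hxb, φ, hφ, hxlim⟩ := isCompact_Icc.tendsto_subseq hX
      have hinv : Tendsto (fun n : ℕ => 1/((φ n : ℝ)+1)) atTop (𝓝 0) :=
        tendsto_one_div_add_atTop_nhds_zero_nat.comp hφ.tendsto_atTop
      have hSlim : Tendsto (fun n => S (φ n)) atTop (𝓝 u) := by
        have hup : Tendsto (fun n : ℕ => u + 1/((φ n : ℝ)+1)) atTop (𝓝 u) := by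
          simpa using tendsto_const_nhds.add hinv
        refine tendsto_of_tendsto_of_tendsto_of_le_of_le tendsto_const_nhds hup
          (fun n => (hS (φ n)).1) (fun n => (hS (φ n)).2)
      have hglim : Tendsto (fun n => g (X (φ n)) u) atTop (𝓝 (g xb u)) := by
        have hcx : Continuous fun x => g x u :=
          hcont.comp (continuous_id.prodMk continuous_const)
        exact (hcx.continuousAt.tendsto).comp hxlim
      have hgeM : M u ≤ g xb u := by
        have hlo : Tendsto (fun n : ℕ => M u - 1/((φ n : ℝ)+1)) atTop (𝓝 (M u)) := by
          simpa using tendsto_const_nhds.sub hinv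
        exact le_of_tendsto_of_tendsto' hlo hglim fun n => hgX (φ n)
      obtain ⟨xm, -, hallm, heqm⟩ := key u
      have hmaxx : ∀ y, g y u ≤ g xb u := by
        intro y
        have h1 : g xm u ≤ g xb u := heqm ▸ hgeM
        exact (hallm y).trans h1
      have h1 : g' xb u ≤ 0 := hmax u hu0 xb hmaxx
      have h2 : r ≤ g' xb u := by
        have htend : Tendsto (fun n => g' (X (φ n)) (S (φ n))) atTop (𝓝 (g' xb u)) := by
          have := (hg'cont.continuousAt (x := (xb, u))).tendsto.comp
            (hxlim.prodMk_nhds hSlim)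
          exact this
        exact ge_of_tendsto htend (Eventually.of_forall fun n => hg'S (φ n))
      linarith
    -- Step 2: eventually the slope of M is < r
    obtain ⟨C, hC0, hC⟩ := bound u (u + δ)
    have h21 : (0:ℝ) < 2*C+1 := by linarith
    obtain ⟨δ', hδ', hd1, hd2⟩ : ∃ δ' : ℝ, 0 < δ' ∧ δ' ≤ δ ∧ δ' ≤ δ/(2*C+1) :=
      ⟨min δ (δ/(2*C+1)), lt_min hδ (by positivity), min_le_left _ _, min_le_right _ _⟩
    have hmem : Ioc u (u + δ') ∈ 𝓝[>] u :=
      Ioc_mem_nhdsGT_of_mem ⟨le_rfl, by linarith⟩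
    have hev : ∀ᶠ z in 𝓝[>] u, slope M u z < r := by
      filter_upwards [hmem] with z hz
      obtain ⟨xz, hxzmem, hallz, heqz⟩ := key z
      obtain ⟨xm, -, hallm, heqm⟩ := key u
      have hzu : u < z := hz.1
      have hz2 : z ≤ u + δ' := hz.2
      have hzIcc : z ∈ Icc u (u + δ) := ⟨hzu.le, by linarith⟩
      have huIcc : u ∈ Icc u (u + δ) := ⟨le_rfl, by linarith⟩
      have l1 := (abs_le.1 (lip C u (u+δ) hC xz u huIcc z hzIcc)).2
      have l2 := (abs_le.1 (lip C u (u+δ) hC xm u huIcc z hzIcc)).1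
      have habs : |z - u| = z - u := abs_of_pos (by linarith)
      rw [habs] at l1 l2
      have hC2 : 2*C*(z - u) ≤ δ := by
        have hzd : z - u ≤ δ/(2*C+1) := by linarith
        have hstep : 2*C*(z-u) ≤ 2*C*(δ/(2*C+1)) := by nlinarith
        have hstep2 : 2*C*(δ/(2*C+1)) ≤ δ := by
          rw [mul_div_assoc', div_le_iff₀ h21]
          nlinarith
        linarith
      have hMz : g xm z ≤ g xz z := hallz xm
      have hlow : M u - δ ≤ g xz u := by
        rw [heqm]
        linarith
      obtain ⟨ξ, hξ, hslope⟩ := exists_hasDerivAt_eq_slope (fun s => g xz s)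
        (fun s => g' xz s) hzu
        ((hcont.comp (continuous_const.prodMk continuous_id)).continuousOn)
        (fun s _ => hderiv xz s)
      have hfin : g' xz ξ < r :=
        hkey xz hxzmem ξ ⟨hξ.1.le, by have := hξ.2; linarith⟩ hlow
      rw [slope_def_field]
      have hMu : g xz u ≤ M u := heqm ▸ hallm xz
      have hnum : M z - M u ≤ g xz z - g xz u := by
        rw [heqz]; linarith
      calc (M z - M u)/(z - u) ≤ (g xz z - g xz u)/(z - u) :=
            (div_le_div_iff_of_pos_right (sub_pos.2 hzu)).2 hnum
        _ = g' xz ξ := hslope.symm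
        _ < r := hfin
    exact hev.frequently
  exact main t₂ ⟨ht₁₂, le_rfl⟩

/-- Maximum/minimum principle: a positive `C¹` solution of
`∂ₜ f = 𝓗f·∂ₓf - f·(-Δ)^{1/2}f` on `𝕋 × [0,∞)` has non-decreasing spatial
minimum and non-increasing spatial maximum. -/
theorem stmt_10 (f : ℝ → ℝ → ℝ)
    (hper : ∀ t, Function.Periodic (fun x => f x t) (2 * Real.pi))
    (hC1 : ContDiff ℝ 1 fun p : ℝ × ℝ => f p.1 p.2)
    (hpos : ∀ x t, 0 ≤ t → 0 < f x t)
    (hcontL : Continuous fun p : ℝ × ℝ => halfLap (fun y => f y p.2) p.1)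
    (heq : ∀ x : ℝ, ∀ t ∈ Set.Ici (0:ℝ),
      HasDerivWithinAt (fun s => f x s)
        (pHilbert (fun y => f y t) x * deriv (fun y => f y t) x
          - f x t * halfLap (fun y => f y t) x) (Set.Ici 0) t) :
    ∀ t₁ t₂ : ℝ, 0 ≤ t₁ → t₁ ≤ t₂ →
      sInf (Set.range fun x => f x t₁) ≤ sInf (Set.range fun x => f x t₂) ∧
      sSup (Set.range fun x => f x t₂) ≤ sSup (Set.range fun x => f x t₁) := by
  intro t₁ t₂ ht₁ ht₁₂
  set F : ℝ × ℝ → ℝ := fun p => f p.1 p.2 with hF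
  have hFdiff : Differentiable ℝ F := hC1.differentiable one_ne_zero
  set dt : ℝ → ℝ → ℝ := fun x t => fderiv ℝ F (x, t) (0, 1) with hdt
  have hdtcont : Continuous fun p : ℝ × ℝ => dt p.1 p.2 := by
    have h1 : Continuous (fderiv ℝ F) := hC1.continuous_fderiv one_ne_zero
    have h2 : Continuous fun p : ℝ × ℝ => fderiv ℝ F p (0, 1) :=
      h1.clm_apply continuous_const
    simpa only [Prod.mk.eta] using h2
  have hderiv : ∀ x t, HasDerivAt (fun s => f x s) (dt x t) t := by
    intro x t
    have h2 : HasDerivAt (fun s : ℝ => ((x, s) : ℝ × ℝ)) (0, 1) t :=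
      (hasDerivAt_const t x).prodMk (hasDerivAt_id t)
    exact (hFdiff (x, t)).hasFDerivAt.comp_hasDerivAt t h2
  have hpde : ∀ (x t : ℝ), 0 ≤ t →
      dt x t = pHilbert (fun y => f y t) x * deriv (fun y => f y t) x
        - f x t * halfLap (fun y => f y t) x := by
    intro x t ht
    have h1 := (heq x t ht).derivWithin ((uniqueDiffOn_Ici (0:ℝ)) t ht)
    have h2 := ((hderiv x t).hasDerivWithinAt (s := Set.Ici (0:ℝ))).derivWithin
      ((uniqueDiffOn_Ici (0:ℝ)) t ht)
    rw [← h1, ← h2]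
  have hmaxf : ∀ t, 0 ≤ t → ∀ x, (∀ y, f y t ≤ f x t) → dt x t ≤ 0 := by
    intro t ht x hx
    have hloc : IsLocalMax (fun y => f y t) x := Filter.Eventually.of_forall hx
    have hderx : deriv (fun y => f y t) x = 0 := hloc.deriv_eq_zero
    have hlap : 0 ≤ halfLap (fun y => f y t) x := by
      unfold halfLap
      apply mul_nonneg (by positivity)
      apply intervalIntegral.integral_nonneg Real.pi_pos.le
      intro y hy
      apply div_nonneg _ (by positivity)
      have h1 := hx (x - y); have h2 := hx (x + y)
      dsimp only at h1 h2 ⊢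
      linarith
    rw [hpde x t ht, hderx, mul_zero, zero_sub, neg_nonpos]
    exact mul_nonneg (hpos x t ht).le hlap
  have hminf : ∀ t, 0 ≤ t → ∀ x, (∀ y, -f y t ≤ -f x t) → -dt x t ≤ 0 := by
    intro t ht x hx
    have hx' : ∀ y, f x t ≤ f y t := fun y => by have := hx y; linarith
    have hloc : IsLocalMin (fun y => f y t) x := Filter.Eventually.of_forall hx'
    have hderx : deriv (fun y => f y t) x = 0 := hloc.deriv_eq_zero
    have hlap : halfLap (fun y => f y t) x ≤ 0 := by
      unfold halfLap
      have hI : (∫ y in (0:ℝ)..Real.pi,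
          (2 * f x t - f (x - y) t - f (x + y) t) / (4 * Real.sin (y / 2) ^ 2)) ≤ 0 := by
        rw [← neg_nonneg, ← intervalIntegral.integral_neg]
        apply intervalIntegral.integral_nonneg Real.pi_pos.le
        intro y hy
        rw [← neg_div]
        apply div_nonneg _ (by positivity)
        rw [neg_nonneg]
        have h1 := hx' (x - y); have h2 := hx' (x + y)
        linarith
      exact mul_nonpos_of_nonneg_of_nonpos (by positivity) hI
    rw [hpde x t ht, hderx, mul_zero, zero_sub, neg_neg]
    exact mul_nonpos_of_nonneg_of_nonpos (hpos x t ht).le hlap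
  have hSup := maxPrinciple f dt hper hC1.continuous hdtcont hderiv hmaxf t₁ t₂ ht₁ ht₁₂
  have hInfAux := maxPrinciple (fun x t => -f x t) (fun x t => -dt x t)
    (fun t x => neg_inj.mpr (hper t x)) hC1.continuous.neg hdtcont.neg
    (fun x t => (hderiv x t).neg) hminf t₁ t₂ ht₁ ht₁₂
  have hneg : ∀ t : ℝ, sSup (Set.range fun x => -f x t) = - sInf (Set.range fun x => f x t) := by
    intro t
    rw [Real.sInf_def, neg_neg]
    congr 1
    ext z
    simp only [Set.mem_range, Set.mem_neg]
    constructor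
    · rintro ⟨y, hy⟩; exact ⟨y, by linarith [hy]⟩
    · rintro ⟨y, hy⟩; exact ⟨y, by linarith [hy]⟩
  rw [hneg, hneg] at hInfAux
  exact ⟨by linarith, hSup⟩
end

section
/- Let f : 𝕋 → (0,∞) be measurable with F := 1/f ∈ L¹(𝕋), and let x* ∈ 𝕋 and δ ∈ (0,π). Then (1/π) ∫_{𝕋∖[-δ,δ]} f(x*+y)/(4 sin²(y/2)) dy ≥ (4/π) |ln tan(δ/4)|² · ‖F‖_{L¹(𝕋)}^{-1}. -/
open MeasureTheory Set
open scoped ENNReal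

lemma aux_deriv (y : ℝ) (hs : Real.sin (y/4) ≠ 0) (hc : Real.cos (y/4) ≠ 0) :
    HasDerivAt (fun y : ℝ => Real.log (Real.tan (y/4))) ((2 * Real.sin (y/2))⁻¹) y := by
  have h4 : HasDerivAt (fun y : ℝ => y/4) (1/4) y := (hasDerivAt_id y).div_const 4
  have htan : HasDerivAt (fun y : ℝ => Real.tan (y/4)) (1 / Real.cos (y/4) ^ 2 * (1/4)) y :=
    HasDerivAt.comp y (Real.hasDerivAt_tan hc) h4
  have ht0 : Real.tan (y/4) ≠ 0 := by
    rw [Real.tan_eq_sin_div_cos]; exact div_ne_zero hs hc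
  have := (Real.hasDerivAt_log ht0).comp y htan
  convert this using 1
  · rfl
  · rfl
  · rfl
  have hsin2 : Real.sin (y/2) = 2 * Real.sin (y/4) * Real.cos (y/4) := by
    have : y/2 = 2 * (y/4) := by ring
    rw [this, Real.sin_two_mul]
  rw [Real.tan_eq_sin_div_cos, hsin2]
  field_simp
  ring

lemma aux_periodic_lintegral {T : ℝ} (hT : 0 < T) {g : ℝ → ℝ≥0∞}
    (hg : Function.Periodic g T) (s t : ℝ) :
    ∫⁻ y in Ioc s (s + T), g y = ∫⁻ y in Ioc t (t + T), g y := by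
  haveI : Fact (0 < T) := ⟨hT⟩
  have h1 : ∀ u : ℝ, ∫⁻ y in Ioc u (u + T), g y = ∫⁻ b : AddCircle T, hg.lift b := by
    intro u
    rw [← AddCircle.lintegral_preimage T u hg.lift]
    exact setLIntegral_congr_fun measurableSet_Ioc
      (fun y _ => (hg.lift_coe y).symm)
  rw [h1 s, h1 t]

lemma aux_int_pos {δ : ℝ} (hδ0 : 0 < δ) (hδπ : δ < Real.pi) :
    ∫ y in δ..Real.pi, (2 * |Real.sin (y/2)|)⁻¹ = -Real.log (Real.tan (δ/4)) := by
  have hpi := Real.pi_pos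
  have key : ∀ y ∈ uIcc δ Real.pi, Real.sin (y/4) ≠ 0 ∧ 0 < Real.cos (y/4) ∧ 0 < Real.sin (y/2) := by
    intro y hy
    rw [uIcc_of_le hδπ.le] at hy
    obtain ⟨h1, h2⟩ := hy
    refine ⟨ne_of_gt (Real.sin_pos_of_pos_of_lt_pi (by linarith) (by nlinarith)), ?_, ?_⟩
    · exact Real.cos_pos_of_mem_Ioo ⟨by nlinarith, by nlinarith⟩
    · exact Real.sin_pos_of_pos_of_lt_pi (by linarith) (by nlinarith)
  have heq : EqOn (fun y : ℝ => (2 * |Real.sin (y/2)|)⁻¹) (fun y : ℝ => (2 * Real.sin (y/2))⁻¹)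
      (uIcc δ Real.pi) := by
    intro y hy
    simp only [abs_of_pos (key y hy).2.2]
  rw [intervalIntegral.integral_congr heq]
  have hint : IntervalIntegrable (fun y : ℝ => (2 * Real.sin (y/2))⁻¹) volume δ Real.pi := by
    apply ContinuousOn.intervalIntegrable
    apply ContinuousOn.inv₀
    · fun_prop
    · intro y hy
      have := (key y hy).2.2; positivity
  rw [intervalIntegral.integral_eq_sub_of_hasDerivAt
    (fun y hy => aux_deriv y (key y hy).1 (ne_of_gt (key y hy).2.1)) hint]
  have : Real.pi / 4 = Real.pi / 4 := rfl
  rw [show Real.pi / 4 = Real.pi/4 from rfl]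
  simp [Real.tan_pi_div_four]

lemma aux_int_neg {δ : ℝ} (hδ0 : 0 < δ) (hδπ : δ < Real.pi) :
    ∫ y in (-Real.pi)..(-δ), (2 * |Real.sin (y/2)|)⁻¹ = -Real.log (Real.tan (δ/4)) := by
  have hpi := Real.pi_pos
  have key : ∀ y ∈ uIcc (-Real.pi) (-δ), Real.sin (y/4) ≠ 0 ∧ 0 < Real.cos (y/4) ∧
      Real.sin (y/2) < 0 := by
    intro y hy
    rw [uIcc_of_le (by linarith)] at hy
    obtain ⟨h1, h2⟩ := hy
    refine ⟨ne_of_lt (Real.sin_neg_of_neg_of_neg_pi_lt (by linarith) (by nlinarith)), ?_, ?_⟩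
    · exact Real.cos_pos_of_mem_Ioo ⟨by nlinarith, by nlinarith⟩
    · exact Real.sin_neg_of_neg_of_neg_pi_lt (by linarith) (by nlinarith)
  have heq : EqOn (fun y : ℝ => (2 * |Real.sin (y/2)|)⁻¹)
      (fun y : ℝ => -(2 * Real.sin (y/2))⁻¹) (uIcc (-Real.pi) (-δ)) := by
    intro y hy
    simp only [abs_of_neg (key y hy).2.2]
    rw [mul_neg, inv_neg]
  rw [intervalIntegral.integral_congr heq]
  have hint : IntervalIntegrable (fun y : ℝ => -(2 * Real.sin (y/2))⁻¹) volume (-Real.pi) (-δ) := by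
    apply ContinuousOn.intervalIntegrable
    apply ContinuousOn.neg
    apply ContinuousOn.inv₀
    · fun_prop
    · intro y hy
      have := (key y hy).2.2; intro h; nlinarith
  rw [intervalIntegral.integral_eq_sub_of_hasDerivAt
    (fun y hy => (aux_deriv y (key y hy).1 (ne_of_gt (key y hy).2.1)).neg) hint]
  have h1 : Real.tan (-δ/4) = -Real.tan (δ/4) := by rw [show -δ/4 = -(δ/4) by ring, Real.tan_neg]
  have h2 : Real.tan (-Real.pi/4) = -1 := by
    rw [show -Real.pi/4 = -(Real.pi/4) by ring, Real.tan_neg, Real.tan_pi_div_four]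
  simp only [Pi.neg_apply]
  rw [h1, h2, Real.log_neg_eq_log, Real.log_neg_eq_log, Real.log_one]
  ring
lemma aux_sq {a : ℝ} (ha : 0 ≤ a) :
    ENNReal.ofReal (Real.sqrt a) ^ (2 : ℝ) = ENNReal.ofReal a := by
  rw [show ((2:ℝ)) = ((2:ℕ):ℝ) by norm_num, ENNReal.rpow_natCast,
    ← ENNReal.ofReal_pow (Real.sqrt_nonneg _), Real.sq_sqrt ha]

lemma aux_translate (G : ℝ → ℝ≥0∞) (x a b : ℝ) :
    ∫⁻ y in Ioc a b, G (x + y) = ∫⁻ z in Ioc (x + a) (x + b), G z := by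
  rw [(measurePreserving_add_left volume x).setLIntegral_comp_emb
    (measurableEmbedding_addLeft x) G (Ioc a b), image_const_add_Ioc]

/-- Key lower bound for instant positivity: for positive measurable `f` on the
torus with `F := 1/f ∈ L¹`, any `x` and `δ ∈ (0,π)`,
`(1/π) ∫_{𝕋∖[-δ,δ]} f(x+y)/(4 sin²(y/2)) dy ≥ (4/π)|ln tan(δ/4)|² ‖F‖_{L¹}⁻¹`. -/
theorem stmt_11 (f : ℝ → ℝ) (hmeas : Measurable f) (hpos : ∀ x, 0 < f x)
    (hper : Function.Periodic f (2 * Real.pi))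
    (hF : (∫⁻ y in Set.Ioc (-Real.pi) Real.pi, ENNReal.ofReal (f y)⁻¹) < ⊤)
    (x δ : ℝ) (hδ : δ ∈ Set.Ioo 0 Real.pi) :
    ENNReal.ofReal ((4 / Real.pi) * |Real.log (Real.tan (δ / 4))| ^ 2) /
        (∫⁻ y in Set.Ioc (-Real.pi) Real.pi, ENNReal.ofReal (f y)⁻¹)
      ≤ ENNReal.ofReal (1 / Real.pi) *
        ∫⁻ y in Set.Ioc δ Real.pi ∪ Set.Ico (-Real.pi) (-δ),
          ENNReal.ofReal (f (x + y) / (4 * Real.sin (y / 2) ^ 2)) := by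
  obtain ⟨hδ0, hδπ⟩ := hδ
  have hpi := Real.pi_pos
  set S : Set ℝ := Set.Ioc δ Real.pi ∪ Set.Ico (-Real.pi) (-δ) with hS
  set β := ∫⁻ y in Set.Ioc (-Real.pi) Real.pi, ENNReal.ofReal (f y)⁻¹ with hβ
  set I := ∫⁻ y in S, ENNReal.ofReal (f (x + y) / (4 * Real.sin (y / 2) ^ 2)) with hI
  set J := ∫⁻ y in S, ENNReal.ofReal (f (x + y))⁻¹ with hJ
  set L := -Real.log (Real.tan (δ / 4)) with hL
  -- basic facts about L
  have htanpos : 0 < Real.tan (δ / 4) :=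
    Real.tan_pos_of_pos_of_lt_pi_div_two (by linarith) (by linarith)
  have htanlt : Real.tan (δ / 4) < 1 := by
    rw [← Real.tan_pi_div_four]
    exact Real.tan_lt_tan_of_nonneg_of_lt_pi_div_two (by linarith) (by linarith) (by linarith)
  have hLpos : 0 < L := by
    rw [hL, neg_pos]
    exact Real.log_neg htanpos htanlt
  have habs : |Real.log (Real.tan (δ / 4))| = L := by
    rw [hL, abs_of_neg (Real.log_neg htanpos htanlt)]
  -- disjointness
  have hdisj : Disjoint (Set.Ioc δ Real.pi) (Set.Ico (-Real.pi) (-δ)) := by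
    rw [Set.disjoint_left]
    rintro y ⟨h1, _⟩ ⟨_, h4⟩
    linarith
  -- Step A : K = ofReal (2 * L)
  have hKpos : ∫⁻ y in Set.Ioc δ Real.pi, ENNReal.ofReal (2 * |Real.sin (y / 2)|)⁻¹
      = ENNReal.ofReal L := by
    have hcont : ContinuousOn (fun y : ℝ => (2 * |Real.sin (y / 2)|)⁻¹) (Set.Icc δ Real.pi) := by
      apply ContinuousOn.inv₀
      · fun_prop
      · intro y hy
        have : 0 < Real.sin (y / 2) :=
          Real.sin_pos_of_pos_of_lt_pi (by linarith [hy.1]) (by nlinarith [hy.2, hy.1])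
        positivity
    have hint : IntegrableOn (fun y : ℝ => (2 * |Real.sin (y / 2)|)⁻¹) (Set.Ioc δ Real.pi) :=
      (hcont.integrableOn_Icc).mono_set Set.Ioc_subset_Icc_self
    rw [← ofReal_integral_eq_lintegral_ofReal hint
      (Filter.Eventually.of_forall fun y => by positivity)]
    rw [← intervalIntegral.integral_of_le hδπ.le, aux_int_pos hδ0 hδπ]
  have hKneg : ∫⁻ y in Set.Ico (-Real.pi) (-δ), ENNReal.ofReal (2 * |Real.sin (y / 2)|)⁻¹
      = ENNReal.ofReal L := by
    rw [setLIntegral_congr Ico_ae_eq_Ioc]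
    have hcont : ContinuousOn (fun y : ℝ => (2 * |Real.sin (y / 2)|)⁻¹)
        (Set.Icc (-Real.pi) (-δ)) := by
      apply ContinuousOn.inv₀
      · fun_prop
      · intro y hy
        have : Real.sin (y / 2) < 0 :=
          Real.sin_neg_of_neg_of_neg_pi_lt (by nlinarith [hy.2]) (by linarith [hy.1])
        have : 0 < |Real.sin (y / 2)| := abs_pos.mpr (ne_of_lt this)
        positivity
    have hint : IntegrableOn (fun y : ℝ => (2 * |Real.sin (y / 2)|)⁻¹)
        (Set.Ioc (-Real.pi) (-δ)) :=
      (hcont.integrableOn_Icc).mono_set Set.Ioc_subset_Icc_self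
    rw [← ofReal_integral_eq_lintegral_ofReal hint
      (Filter.Eventually.of_forall fun y => by positivity)]
    rw [← intervalIntegral.integral_of_le (by linarith), aux_int_neg hδ0 hδπ]
  have hK : ∫⁻ y in S, ENNReal.ofReal (2 * |Real.sin (y / 2)|)⁻¹ = ENNReal.ofReal (2 * L) := by
    rw [hS, lintegral_union measurableSet_Ico hdisj, hKpos, hKneg,
      ← ENNReal.ofReal_add hLpos.le hLpos.le]
    ring_nf
  -- Step B : Hölder
  have hfx : Measurable fun y : ℝ => f (x + y) := hmeas.comp (measurable_const.add measurable_id)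
  set P : ℝ → ℝ≥0∞ :=
    fun y => ENNReal.ofReal (Real.sqrt (f (x + y) / (4 * Real.sin (y / 2) ^ 2))) with hP
  set Q : ℝ → ℝ≥0∞ := fun y => ENNReal.ofReal (Real.sqrt (f (x + y))⁻¹) with hQ
  have hPm : Measurable P := by
    apply Measurable.ennreal_ofReal
    apply Measurable.sqrt
    exact hfx.div (by fun_prop)
  have hQm : Measurable Q := by
    apply Measurable.ennreal_ofReal
    apply Measurable.sqrt
    exact hfx.inv
  have hconj : Real.HolderConjugate 2 2 := Real.HolderConjugate.two_two
  have holder := ENNReal.lintegral_mul_le_Lp_mul_Lq (volume.restrict S) hconj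
    hPm.aemeasurable hQm.aemeasurable
  have hP2 : ∀ y : ℝ, P y ^ (2 : ℝ) = ENNReal.ofReal (f (x + y) / (4 * Real.sin (y / 2) ^ 2)) := by
    intro y
    have hnn : 0 ≤ f (x + y) / (4 * Real.sin (y / 2) ^ 2) :=
      div_nonneg (hpos _).le (by positivity)
    simp only [hP]
    exact aux_sq hnn
  have hQ2 : ∀ y : ℝ, Q y ^ (2 : ℝ) = ENNReal.ofReal (f (x + y))⁻¹ := by
    intro y
    simp only [hQ]
    exact aux_sq (inv_nonneg.mpr (hpos _).le)
  have hPQ : ∀ y ∈ S, P y * Q y = ENNReal.ofReal (2 * |Real.sin (y / 2)|)⁻¹ := by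
    intro y hy
    have hsin : Real.sin (y / 2) ≠ 0 := by
      rcases hy with hy | hy
      · exact ne_of_gt (Real.sin_pos_of_pos_of_lt_pi (by linarith [hy.1]) (by nlinarith [hy.2]))
      · exact ne_of_lt (Real.sin_neg_of_neg_of_neg_pi_lt (by nlinarith [hy.2]) (by linarith [hy.1]))
    have hf0 : f (x + y) ≠ 0 := ne_of_gt (hpos _)
    simp only [hP, hQ]
    rw [← ENNReal.ofReal_mul (Real.sqrt_nonneg _),
      ← Real.sqrt_mul (div_nonneg (hpos _).le (by positivity))]
    congr 1
    have : f (x + y) / (4 * Real.sin (y / 2) ^ 2) * (f (x + y))⁻¹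
        = ((2 * Real.sin (y / 2)) ^ 2)⁻¹ := by
      field_simp
      ring
    rw [this, Real.sqrt_inv, Real.sqrt_sq_eq_abs, abs_mul, abs_two]
  have hS_meas : MeasurableSet S := measurableSet_Ioc.union measurableSet_Ico
  have e0 : ∫⁻ a in S, (P * Q) a = ENNReal.ofReal (2 * L) := by
    rw [← hK]
    exact setLIntegral_congr_fun hS_meas (fun y hy => by
      simp only [Pi.mul_apply]; exact hPQ y hy)
  simp only [hP2, hQ2] at holder
  rw [e0, ← hI, ← hJ] at holder
  have hsq : ENNReal.ofReal (2 * L) ^ 2 ≤ I * J := by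
    calc ENNReal.ofReal (2 * L) ^ 2 ≤ (I ^ (1/2 : ℝ) * J ^ (1/2 : ℝ)) ^ 2 :=
          pow_le_pow_left₀ (zero_le) holder 2
      _ = I * J := by
          rw [mul_pow, ← ENNReal.rpow_natCast (I ^ (1/2:ℝ)) 2,
            ← ENNReal.rpow_natCast (J ^ (1/2:ℝ)) 2, ← ENNReal.rpow_mul, ← ENNReal.rpow_mul]
          norm_num
  -- Step C : J ≤ β
  have hG : Function.Periodic (fun y : ℝ => ENNReal.ofReal (f y)⁻¹) (2 * Real.pi) :=
    fun y => by simp [hper y]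
  have hJβ : J ≤ β := by
    have h1 : J = ∫⁻ y in Set.Ioc δ Real.pi ∪ Set.Ioc (-Real.pi) (-δ),
        ENNReal.ofReal (f (x + y))⁻¹ := by
      rw [hJ, hS]
      exact setLIntegral_congr ((Filter.EventuallyEq.refl _ _).union Ico_ae_eq_Ioc)
    have h2 : Set.Ioc δ Real.pi ∪ Set.Ioc (-Real.pi) (-δ) ⊆ Set.Ioc (-Real.pi) Real.pi := by
      rintro y (⟨h1', h2'⟩ | ⟨h1', h2'⟩) <;> exact ⟨by linarith, by linarith⟩
    have h3 : ∫⁻ y in Set.Ioc (-Real.pi) Real.pi, ENNReal.ofReal (f (x + y))⁻¹ = β := by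
      rw [aux_translate (fun y => ENNReal.ofReal (f y)⁻¹) x (-Real.pi) Real.pi]
      have := aux_periodic_lintegral (by positivity) hG (x + -Real.pi) (-Real.pi)
      rw [show x + -Real.pi + 2 * Real.pi = x + Real.pi by ring,
        show -Real.pi + 2 * Real.pi = Real.pi by ring] at this
      rw [this, hβ]
    rw [h1, ← h3]
    exact lintegral_mono_set h2
  -- β is positive and finite
  have hβ0 : β ≠ 0 := by
    rw [hβ]
    have hm : Measurable fun y : ℝ => ENNReal.ofReal (f y)⁻¹ := hmeas.inv.ennreal_ofReal
    have hsupp : Function.support (fun y : ℝ => ENNReal.ofReal (f y)⁻¹) = Set.univ := by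
      rw [Set.eq_univ_iff_forall]
      intro y
      rw [Function.mem_support]
      exact ne_of_gt (ENNReal.ofReal_pos.mpr (inv_pos.mpr (hpos y)))
    have : 0 < ∫⁻ y in Set.Ioc (-Real.pi) Real.pi, ENNReal.ofReal (f y)⁻¹ := by
      rw [lintegral_pos_iff_support hm, hsupp, Measure.restrict_apply_univ, Real.volume_Ioc]
      rw [ENNReal.ofReal_pos]
      linarith
    exact ne_of_gt this
  have hβtop : β ≠ ⊤ := hF.ne
  -- final assembly
  rw [habs, ENNReal.div_le_iff hβ0 hβtop]
  calc ENNReal.ofReal (4 / Real.pi * L ^ 2)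
      = ENNReal.ofReal (1 / Real.pi) * ENNReal.ofReal ((2 * L) ^ 2) := by
        rw [← ENNReal.ofReal_mul (by positivity)]
        congr 1
        ring
    _ = ENNReal.ofReal (1 / Real.pi) * ENNReal.ofReal (2 * L) ^ 2 := by
        rw [← ENNReal.ofReal_pow (by positivity)]
    _ ≤ ENNReal.ofReal (1 / Real.pi) * (I * J) := mul_le_mul_right hsq _
    _ ≤ ENNReal.ofReal (1 / Real.pi) * (I * β) := mul_le_mul_right (mul_le_mul_right hJβ I) _
    _ = ENNReal.ofReal (1 / Real.pi) * I * β := (mul_assoc _ _ _).symm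
end

section
/- Let A > 0 and let g : [0,∞) → (-A, 0] be differentiable with (d/dt) ln((A+g(t))/(A-g(t))) ≤ -A/π for all t > 0. Then for all t > 0, g(t) ≤ A·(e^{-At/π} - 1)/(e^{-At/π} + 1) = -A tanh(At/(2π)). Consequently if g(t) = 1/ln f*(t) with f*(t) ∈ (0, e^{-1/A}), then f*(t) ≥ exp(-(1/A) coth(At/(2π))). -/
/-- ODE comparison lemma: if `g : [0,∞) → (-A, 0]` is differentiable with
`(d/dt) ln((A+g)/(A-g)) ≤ -A/π` for `t > 0`, then
`g(t) ≤ A (e^{-At/π} - 1)/(e^{-At/π} + 1) = -A tanh(At/(2π))`; consequently,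
if `g = 1/ln f⋆` with `f⋆(t) ∈ (0, e^{-1/A})`, then
`f⋆(t) ≥ exp(-(1/A) coth(At/(2π)))`. -/
theorem stmt_12 (A : ℝ) (hA : 0 < A) (g ψ : ℝ → ℝ)
    (hg : ∀ t, 0 ≤ t → -A < g t ∧ g t ≤ 0)
    (hgc : ContinuousOn g (Set.Ici 0))
    (hd : ∀ t, 0 < t →
      HasDerivAt (fun s => Real.log ((A + g s) / (A - g s))) (ψ t) t ∧ ψ t ≤ -A / Real.pi) :
    (∀ t, 0 < t →
        g t ≤ A * (Real.exp (-A * t / Real.pi) - 1) / (Real.exp (-A * t / Real.pi) + 1)) ∧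
    (∀ t : ℝ, A * (Real.exp (-A * t / Real.pi) - 1) / (Real.exp (-A * t / Real.pi) + 1)
        = -(A * Real.tanh (A * t / (2 * Real.pi)))) ∧
    (∀ fstar : ℝ → ℝ,
      (∀ t, 0 < t → g t = (Real.log (fstar t))⁻¹ ∧ 0 < fstar t ∧
          fstar t < Real.exp (-(1 / A))) →
      ∀ t, 0 < t →
        Real.exp (-(1 / A) * (Real.tanh (A * t / (2 * Real.pi)))⁻¹) ≤ fstar t) := by
  have hπ : (0:ℝ) < Real.pi := Real.pi_pos
  have hApg : ∀ t, 0 ≤ t → 0 < A + g t := fun t ht => by linarith [(hg t ht).1]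
  have hAmg : ∀ t, 0 ≤ t → 0 < A - g t := fun t ht => by linarith [(hg t ht).2]
  have hq : ∀ t, 0 ≤ t → 0 < (A + g t) / (A - g t) := fun t ht =>
    div_pos (hApg t ht) (hAmg t ht)
  set φ : ℝ → ℝ := fun s => Real.log ((A + g s) / (A - g s)) + A / Real.pi * s with hφ
  have hφc : ContinuousOn φ (Set.Ici 0) := by
    apply ContinuousOn.add
    · exact ContinuousOn.log
        ((continuousOn_const.add hgc).div (continuousOn_const.sub hgc)
          (fun x hx => (hAmg x hx).ne'))
        (fun x hx => (hq x hx).ne')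
    · exact (continuous_const.mul continuous_id).continuousOn
  have hφd : ∀ t ∈ interior (Set.Ici (0:ℝ)), HasDerivAt φ (ψ t + A / Real.pi) t := by
    intro t ht
    rw [interior_Ici] at ht
    have h1 := (hd t ht).1
    have h2 : HasDerivAt (fun s : ℝ => A / Real.pi * s) (A / Real.pi) t := by
      simpa using (hasDerivAt_id t).const_mul (A / Real.pi)
    exact h1.add h2
  have hanti : AntitoneOn φ (Set.Ici 0) := by
    apply antitoneOn_of_deriv_nonpos (convex_Ici 0) hφc
    · intro t ht; exact (hφd t ht).differentiableAt.differentiableWithinAt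
    · intro t ht
      rw [(hφd t ht).deriv]
      rw [interior_Ici] at ht
      have h2 := (hd t ht).2
      have h3 : -A / Real.pi = -(A / Real.pi) := by ring
      rw [h3] at h2
      linarith
  have part1 : ∀ t, 0 < t →
      g t ≤ A * (Real.exp (-A * t / Real.pi) - 1) / (Real.exp (-A * t / Real.pi) + 1) := by
    intro t ht
    have h0 : φ 0 ≤ 0 := by
      have hle1 : (A + g 0) / (A - g 0) ≤ 1 := by
        rw [div_le_one (hAmg 0 le_rfl)]
        linarith [(hg 0 le_rfl).2]
      have := Real.log_nonpos (le_of_lt (hq 0 le_rfl)) hle1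
      simp only [hφ, mul_zero, add_zero]
      exact this
    have hle : φ t ≤ φ 0 := hanti Set.self_mem_Ici (le_of_lt ht) (le_of_lt ht)
    have hlog : Real.log ((A + g t) / (A - g t)) ≤ -A * t / Real.pi := by
      simp only [hφ] at hle
      have : Real.log ((A + g t) / (A - g t)) + A / Real.pi * t ≤ 0 := le_trans hle h0
      have h2 : -A * t / Real.pi = -(A / Real.pi * t) := by ring
      rw [h2]; linarith
    have hE : (A + g t) / (A - g t) ≤ Real.exp (-A * t / Real.pi) := by
      calc (A + g t) / (A - g t) = Real.exp (Real.log ((A + g t) / (A - g t))) :=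
            (Real.exp_log (hq t ht.le)).symm
        _ ≤ Real.exp (-A * t / Real.pi) := Real.exp_le_exp.mpr hlog
    have hEpos : (0:ℝ) < Real.exp (-A * t / Real.pi) := Real.exp_pos _
    rw [div_le_iff₀ (hAmg t ht.le)] at hE
    rw [le_div_iff₀ (by positivity : (0:ℝ) < Real.exp (-A * t / Real.pi) + 1)]
    nlinarith [hE]
  have part2 : ∀ t : ℝ, A * (Real.exp (-A * t / Real.pi) - 1) / (Real.exp (-A * t / Real.pi) + 1)
      = -(A * Real.tanh (A * t / (2 * Real.pi))) := by
    intro t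
    set x := A * t / (2 * Real.pi) with hx
    have hxe : -A * t / Real.pi = -x + -x := by
      rw [hx]; field_simp; ring
    rw [hxe, Real.exp_add, Real.exp_neg, Real.tanh_eq_sinh_div_cosh, Real.sinh_eq,
      Real.cosh_eq, Real.exp_neg]
    have hu : (0:ℝ) < Real.exp x := Real.exp_pos x
    have hu1 : (0:ℝ) < (Real.exp x)⁻¹ * (Real.exp x)⁻¹ + 1 := by positivity
    have hu2 : (0:ℝ) < (Real.exp x + (Real.exp x)⁻¹) / 2 := by positivity
    field_simp
    ring
  refine ⟨part1, part2, ?_⟩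
  intro fstar hf t ht
  obtain ⟨hge, hfpos, hflt⟩ := hf t ht
  set T := Real.tanh (A * t / (2 * Real.pi)) with hT
  have hxpos : 0 < A * t / (2 * Real.pi) := by positivity
  have htanh : 0 < T := by
    rw [hT, Real.tanh_eq_sinh_div_cosh]
    exact div_pos (Real.sinh_pos_iff.mpr hxpos) (Real.cosh_pos _)
  have hL : Real.log (fstar t) < 0 := by
    have h1 := Real.log_lt_log hfpos hflt
    rw [Real.log_exp] at h1
    have : 0 < 1 / A := by positivity
    linarith
  have h1 := part1 t ht
  rw [part2 t, hge] at h1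
  have hb : -(A * T) < 0 := by nlinarith
  have h4 : -(A * T) * Real.log (fstar t) ≤ 1 := by
    calc -(A * T) * Real.log (fstar t)
        ≤ (Real.log (fstar t))⁻¹ * Real.log (fstar t) :=
          mul_le_mul_of_nonpos_right h1 hL.le
      _ = 1 := inv_mul_cancel₀ hL.ne
  have key : -(1 / A) * T⁻¹ ≤ Real.log (fstar t) := by
    have heq : -(1 / A) * T⁻¹ = (-(A * T))⁻¹ := by
      field_simp
    rw [heq]
    nlinarith [mul_inv_cancel₀ (ne_of_lt hb), h4, hb]
  calc Real.exp (-(1 / A) * T⁻¹) ≤ Real.exp (Real.log (fstar t)) := Real.exp_le_exp.mpr key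
    _ = fstar t := Real.exp_log hfpos
end

section
/- Let f be band-limited with Fourier coefficients f̂_k, k ∈ ℤ, f̂_{-k} = conj(f̂_k). Write the equation ∂_t f = 𝓗f·∂_x f - f(-Δ)^{1/2}f in Fourier: for m ≥ 0, (d/dt) f̂_m = -m f̄(t) f̂_m - Σ_{n≥1} 2(m+2n) f̂_{m+n} conj(f̂_n), where f̄ = f̂_0. Consequently, if f̂_k(0) = 0 for all |k| > K, then the unique band-limited solution satisfies f̂_k(t) = 0 for all |k| > K and all t ≥ 0. -/
open Set

/-- A linear ODE with zero initial data has the zero solution. -/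
lemma linODE_zero (g c : ℝ → ℂ) (T : ℝ) (hT : 0 ≤ T)
    (hg : ContinuousOn g (Icc 0 T))
    (hd : ∀ x ∈ Ico (0:ℝ) T, HasDerivWithinAt g (c x * g x) (Ici x) x)
    (hc : Continuous c)
    (h0 : g 0 = 0) : g T = 0 := by
  obtain ⟨C, hC⟩ := (isCompact_Icc (a := (0:ℝ)) (b := T)).exists_bound_of_continuousOn
    (hc.norm.continuousOn)
  have hbd : ∀ x ∈ Ico (0:ℝ) T, ‖c x * g x‖ ≤ C * ‖g x‖ + 0 := by
    intro x hx
    rw [norm_mul, add_zero]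
    have := hC x (Ico_subset_Icc_self hx)
    exact mul_le_mul_of_nonneg_right (by simpa using this) (norm_nonneg _)
  have := norm_le_gronwallBound_of_norm_deriv_right_le (δ := 0) (K := C) (ε := 0) hg hd (by simp [h0]) hbd T
    (right_mem_Icc.mpr hT)
  rw [gronwallBound_ε0_δ0] at this
  simpa using le_antisymm this (norm_nonneg _)

/-- Band-limitation is preserved: let `a t k` be the Fourier coefficients
`f̂_k(t)` of a band-limited solution of the tangential Peskin problem, so that
`a t (-k) = conj (a t k)` and, for each `m ≥ 0`,
`(d/dt) f̂_m = -m f̂_0 f̂_m - ∑_{n ≥ 1} 2(m+2n) f̂_{m+n} conj(f̂_n)`.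
If `f̂_k(0) = 0` for all `|k| > K`, then `f̂_k(t) = 0` for all `|k| > K`, `t ≥ 0`. -/
theorem stmt_16 (K : ℕ) (a : ℝ → ℤ → ℂ)
    (hreal : ∀ (t : ℝ) (k : ℤ), a t (-k) = (starRingEnd ℂ) (a t k))
    (hband : ∃ L : ℕ, ∀ t ≥ (0:ℝ), ∀ k : ℤ, (L : ℤ) < |k| → a t k = 0)
    (hcont : ∀ k : ℤ, Continuous fun t => a t k)
    (hODE : ∀ m : ℤ, 0 ≤ m → ∀ t ≥ (0:ℝ),
      HasDerivAt (fun s => a s m)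
        (-(m : ℂ) * a t 0 * a t m
          - ∑' n : ℕ, 2 * ((m : ℂ) + 2 * ((n : ℂ) + 1)) * a t (m + ((n : ℤ) + 1)) *
              (starRingEnd ℂ) (a t ((n : ℤ) + 1))) t)
    (h0 : ∀ k : ℤ, (K : ℤ) < |k| → a 0 k = 0) :
    ∀ t ≥ (0:ℝ), ∀ k : ℤ, (K : ℤ) < |k| → a t k = 0 := by
  obtain ⟨L, hL⟩ := hband
  -- key step: if all frequencies strictly above `m` vanish, so does frequency `m`
  have key : ∀ m : ℤ, (K : ℤ) < m →
      (∀ t ≥ (0:ℝ), ∀ k : ℤ, m < |k| → a t k = 0) →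
      ∀ t ≥ (0:ℝ), ∀ k : ℤ, m ≤ |k| → a t k = 0 := by
    intro m hm hprev t ht k hk
    have hm0 : (0:ℤ) ≤ m := le_trans (Int.ofNat_nonneg K) hm.le
    rcases lt_or_eq_of_le hk with h | h
    · exact hprev t ht k h
    -- |k| = m; reduce to the positive frequency m
    have hmain : a t m = 0 := by
      apply linODE_zero (fun s => a s m) (fun s => -(m : ℂ) * a s 0) t ht
        ((hcont m).continuousOn)
      · intro x hx
        have hD := hODE m hm0 x hx.1
        have hts : (∑' n : ℕ, 2 * ((m : ℂ) + 2 * ((n : ℂ) + 1)) * a x (m + ((n : ℤ) + 1)) *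
            (starRingEnd ℂ) (a x ((n : ℤ) + 1))) = 0 := by
          have : ∀ n : ℕ, 2 * ((m : ℂ) + 2 * ((n : ℂ) + 1)) * a x (m + ((n : ℤ) + 1)) *
              (starRingEnd ℂ) (a x ((n : ℤ) + 1)) = 0 := by
            intro n
            have hz : a x (m + ((n : ℤ) + 1)) = 0 := by
              apply hprev x hx.1
              have : (0:ℤ) ≤ (n : ℤ) := Int.ofNat_nonneg n
              rw [abs_of_nonneg (by omega)]
              omega
            rw [hz]; ring
          simp [this]
        rw [hts, sub_zero] at hD
        exact hD.hasDerivWithinAt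
      · exact (continuous_const.mul (hcont 0))
      · exact h0 m (by rwa [abs_of_nonneg hm0])
    rcases abs_eq hm0 |>.mp h.symm with rfl | rfl
    · exact hmain
    · rw [hreal t m, hmain, map_zero]
  -- downward induction on the band
  have Q : ∀ j : ℕ, j ≤ L - K → ∀ t ≥ (0:ℝ), ∀ k : ℤ, (L : ℤ) + 1 - j ≤ |k| → a t k = 0 := by
    intro j
    induction j with
    | zero =>
      intro _ t ht k hk
      exact hL t ht k (by push_cast at hk ⊢; omega)
    | succ j ih =>
      intro hj t ht k hk
      have hjL : j + 1 ≤ L - K := hj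
      have hKL : K < L := by omega
      have hKm : (K : ℤ) < (L : ℤ) - j := by push_cast; omega
      refine key ((L:ℤ) - j) hKm (fun s hs k' hk' => ih (by omega) s hs k' (by omega))
        t ht k (by push_cast at hk ⊢; omega)
  intro t ht k hk
  by_cases hKL : K < L
  · have := Q (L - K) le_rfl t ht k ?_
    · exact this
    · push_cast
      have : (K:ℤ) ≤ L := by exact_mod_cast hKL.le
      omega
  · exact hL t ht k (by push_cast at hk ⊢; omega)
end

section
/- Let (a_k)_{k≥1} be nonnegative reals and ν ≥ 0. Then Σ_{k≥1} e^{kν} Σ_{j≥1} (k+2j) a_{k+j} a_j ≤ 2 e^{-2ν} (Σ_{j≥1} e^{jν} a_j) (Σ_{m≥1} m e^{mν} a_m), provided all sums converge. -/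
/-- Discrete convolution inequality for the Wiener-algebra analyticity
estimate: for nonnegative `(a_k)_{k ≥ 1}` and `ν ≥ 0`,
`∑_{k≥1} e^{kν} ∑_{j≥1} (k+2j) a_{k+j} a_j
  ≤ 2 e^{-2ν} (∑_{j≥1} e^{jν} a_j)(∑_{m≥1} m e^{mν} a_m)`,
provided all the sums converge. -/
theorem stmt_18 (a : ℕ → ℝ) (ν : ℝ) (ha : ∀ k, 0 ≤ a k) (hν : 0 ≤ ν)
    (hsum1 : Summable fun j : ℕ => Real.exp (((j : ℝ) + 1) * ν) * a (j + 1))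
    (hsum2 : Summable fun m : ℕ => ((m : ℝ) + 1) * Real.exp (((m : ℝ) + 1) * ν) * a (m + 1))
    (hsum3 : Summable fun p : ℕ × ℕ =>
      Real.exp (((p.1 : ℝ) + 1) * ν) * (((p.1 : ℝ) + 1) + 2 * ((p.2 : ℝ) + 1)) *
        a ((p.1 + 1) + (p.2 + 1)) * a (p.2 + 1)) :
    (∑' k : ℕ, Real.exp (((k : ℝ) + 1) * ν) *
        ∑' j : ℕ, (((k : ℝ) + 1) + 2 * ((j : ℝ) + 1)) * a ((k + 1) + (j + 1)) * a (j + 1))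
      ≤ 2 * Real.exp (-2 * ν) *
          (∑' j : ℕ, Real.exp (((j : ℝ) + 1) * ν) * a (j + 1)) *
          (∑' m : ℕ, ((m : ℝ) + 1) * Real.exp (((m : ℝ) + 1) * ν) * a (m + 1)) := by
  set F : ℕ × ℕ → ℝ := fun p =>
    Real.exp (((p.1 : ℝ) + 1) * ν) * (((p.1 : ℝ) + 1) + 2 * ((p.2 : ℝ) + 1)) *
      a ((p.1 + 1) + (p.2 + 1)) * a (p.2 + 1) with hF
  set G : ℕ × ℕ → ℝ := fun q =>
    (Real.exp (((q.1 : ℝ) + 1) * ν) * a (q.1 + 1)) *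
      ((((q.2 : ℝ) + (q.1 : ℝ) + 2)) * Real.exp ((((q.2 : ℝ) + (q.1 : ℝ)) + 2) * ν) *
        a (q.2 + q.1 + 2)) with hG
  have hepos : ∀ x : ℝ, (0:ℝ) ≤ Real.exp x := fun x => (Real.exp_pos x).le
  -- slice summability for G
  have hGslice : ∀ j : ℕ, Summable fun k => G (j, k) := by
    intro j
    have h1 : Summable fun k : ℕ =>
        ((((k + (j+1)) : ℕ) : ℝ) + 1) * Real.exp (((((k + (j+1)) : ℕ) : ℝ) + 1) * ν) *
          a ((k + (j+1)) + 1) :=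
      hsum2.comp_injective (add_left_injective (j+1))
    refine (h1.mul_left (Real.exp (((j : ℝ) + 1) * ν) * a (j + 1))).congr fun k => ?_
    have e1 : k + (j+1) + 1 = k + j + 2 := by omega
    simp only [hG, e1]
    push_cast
    ring
  -- tsum over k of the G-slice is bounded by S2
  have hGslice_le : ∀ j : ℕ,
      (∑' k : ℕ, (((k : ℝ) + (j : ℝ) + 2)) * Real.exp ((((k : ℝ) + (j : ℝ)) + 2) * ν) *
          a (k + j + 2))
        ≤ ∑' m : ℕ, ((m : ℝ) + 1) * Real.exp (((m : ℝ) + 1) * ν) * a (m + 1) := by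
    intro j
    have hinner : Summable fun k : ℕ =>
        (((k : ℝ) + (j : ℝ) + 2)) * Real.exp ((((k : ℝ) + (j : ℝ)) + 2) * ν) * a (k + j + 2) := by
      refine (hsum2.comp_injective (add_left_injective (j+1))).congr fun k => ?_
      have e1 : k + (j+1) + 1 = k + j + 2 := by omega
      simp only [Function.comp_apply, e1]
      push_cast
      ring
    refine Summable.tsum_le_tsum_of_inj (fun k => k + (j+1)) (add_left_injective (j+1))
      (fun c _ => by have := ha (c+1); positivity) (fun k => le_of_eq ?_) hinner hsum2
    have e1 : k + (j+1) + 1 = k + j + 2 := by omega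
    simp only [e1]
    push_cast
    ring
  -- nonnegativity of G
  have hG0 : ∀ q : ℕ × ℕ, 0 ≤ G q := by
    intro q
    simp only [hG]
    have := ha (q.1 + 1); have := ha (q.2 + q.1 + 2)
    have hq1 : (0:ℝ) ≤ (q.1:ℝ) := Nat.cast_nonneg _
    have hq2 : (0:ℝ) ≤ (q.2:ℝ) := Nat.cast_nonneg _
    positivity
  -- row sums of G
  have hGrowEq : ∀ j : ℕ, (∑' k : ℕ, G (j, k)) =
      (Real.exp (((j : ℝ) + 1) * ν) * a (j + 1)) *
        ∑' k : ℕ, (((k : ℝ) + (j : ℝ) + 2)) * Real.exp ((((k : ℝ) + (j : ℝ)) + 2) * ν) *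
          a (k + j + 2) := by
    intro j
    simp only [hG]
    exact tsum_mul_left
  have hGrowLe : ∀ j : ℕ, (∑' k : ℕ, G (j, k)) ≤
      (Real.exp (((j : ℝ) + 1) * ν) * a (j + 1)) *
        ∑' m : ℕ, ((m : ℝ) + 1) * Real.exp (((m : ℝ) + 1) * ν) * a (m + 1) := by
    intro j
    rw [hGrowEq j]
    exact mul_le_mul_of_nonneg_left (hGslice_le j)
      (mul_nonneg (hepos _) (ha _))
  have hGrowSummable : Summable fun j : ℕ => ∑' k : ℕ, G (j, k) := by
    refine Summable.of_nonneg_of_le (fun j => tsum_nonneg fun k => hG0 (j, k))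
      (fun j => hGrowLe j) ?_
    exact hsum1.mul_right _
  have hGsum : Summable G := (summable_prod_of_nonneg (fun q => hG0 q)).mpr ⟨hGslice, hGrowSummable⟩
  -- total sum of G bounded by S1 * S2
  have hGtsum_le : (∑' q : ℕ × ℕ, G q) ≤
      (∑' j : ℕ, Real.exp (((j : ℝ) + 1) * ν) * a (j + 1)) *
        (∑' m : ℕ, ((m : ℝ) + 1) * Real.exp (((m : ℝ) + 1) * ν) * a (m + 1)) := by
    rw [Summable.tsum_prod' hGsum hGslice]
    calc (∑' j : ℕ, ∑' k : ℕ, G (j, k))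
        ≤ ∑' j : ℕ, (Real.exp (((j : ℝ) + 1) * ν) * a (j + 1)) *
            (∑' m : ℕ, ((m : ℝ) + 1) * Real.exp (((m : ℝ) + 1) * ν) * a (m + 1)) :=
          Summable.tsum_le_tsum hGrowLe hGrowSummable (hsum1.mul_right _)
      _ = _ := tsum_mul_right
  -- pointwise bound F p ≤ 2 e^{-2ν} G (p.2, p.1)
  have hpoint : ∀ p : ℕ × ℕ, F p ≤ 2 * Real.exp (-2 * ν) * G (p.2, p.1) := by
    rintro ⟨k, j⟩
    simp only [hF, hG]
    have e1 : k + 1 + (j + 1) = k + j + 2 := by omega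
    rw [e1]
    have hj : (0:ℝ) ≤ (j:ℝ) := Nat.cast_nonneg j
    have hk : (0:ℝ) ≤ (k:ℝ) := Nat.cast_nonneg k
    have key : Real.exp (((k:ℝ)+1)*ν) * (((k:ℝ)+1)+2*((j:ℝ)+1)) ≤
        2 * Real.exp (-2*ν) * Real.exp (((j:ℝ)+1)*ν) *
          (((k:ℝ)+(j:ℝ)+2) * Real.exp ((((k:ℝ)+(j:ℝ))+2)*ν)) := by
      have h1 : Real.exp (((k:ℝ)+1)*ν) ≤ Real.exp ((((k:ℝ)+2*(j:ℝ))+1)*ν) :=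
        Real.exp_le_exp.mpr (by nlinarith)
      have h2 : (((k:ℝ)+1)+2*((j:ℝ)+1)) ≤ 2 * ((k:ℝ)+(j:ℝ)+2) := by linarith
      have hcomb : Real.exp (-2*ν) * (Real.exp (((j:ℝ)+1)*ν) *
          Real.exp ((((k:ℝ)+(j:ℝ))+2)*ν)) = Real.exp ((((k:ℝ)+2*(j:ℝ))+1)*ν) := by
        rw [← Real.exp_add, ← Real.exp_add]
        ring_nf
      calc Real.exp (((k:ℝ)+1)*ν) * (((k:ℝ)+1)+2*((j:ℝ)+1))
          ≤ Real.exp ((((k:ℝ)+2*(j:ℝ))+1)*ν) * (2 * ((k:ℝ)+(j:ℝ)+2)) :=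
            mul_le_mul h1 h2 (by positivity) (hepos _)
        _ = _ := by rw [← hcomb]; ring
    have hAB : (0:ℝ) ≤ a (k + j + 2) * a (j + 1) :=
      mul_nonneg (ha _) (ha _)
    have h4 := mul_le_mul_of_nonneg_right key hAB
    calc Real.exp (((k:ℝ)+1)*ν) * (((k:ℝ)+1)+2*((j:ℝ)+1)) * a (k+j+2) * a (j+1)
        = Real.exp (((k:ℝ)+1)*ν) * (((k:ℝ)+1)+2*((j:ℝ)+1)) * (a (k+j+2) * a (j+1)) := by
          ring
      _ ≤ 2 * Real.exp (-2*ν) * Real.exp (((j:ℝ)+1)*ν) *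
            (((k:ℝ)+(j:ℝ)+2) * Real.exp ((((k:ℝ)+(j:ℝ))+2)*ν)) *
            (a (k+j+2) * a (j+1)) := h4
      _ = 2 * Real.exp (-2*ν) * (Real.exp (((j:ℝ)+1)*ν) * a (j+1) *
            (((k:ℝ)+(j:ℝ)+2) * Real.exp ((((k:ℝ)+(j:ℝ))+2)*ν) * a (k+j+2))) := by
          ring
  -- summability of the swapped bound
  have hswap : Summable fun p : ℕ × ℕ => G (p.2, p.1) := by
    have := (Equiv.prodComm ℕ ℕ).summable_iff.mpr hGsum
    exact this
  -- rewrite LHS as a sum over pairs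
  have hLHS : (∑' k : ℕ, Real.exp (((k : ℝ) + 1) * ν) *
      ∑' j : ℕ, (((k : ℝ) + 1) + 2 * ((j : ℝ) + 1)) * a ((k + 1) + (j + 1)) * a (j + 1))
      = ∑' p : ℕ × ℕ, F p := by
    rw [Summable.tsum_prod' hsum3 hsum3.prod_factor]
    refine tsum_congr fun k => ?_
    rw [← tsum_mul_left]
    exact tsum_congr fun j => by simp only [hF]; ring
  rw [hLHS]
  calc (∑' p : ℕ × ℕ, F p)
      ≤ ∑' p : ℕ × ℕ, 2 * Real.exp (-2 * ν) * G (p.2, p.1) :=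
        Summable.tsum_le_tsum hpoint hsum3 (hswap.mul_left _)
    _ = 2 * Real.exp (-2 * ν) * ∑' p : ℕ × ℕ, G (p.2, p.1) := tsum_mul_left
    _ = 2 * Real.exp (-2 * ν) * ∑' q : ℕ × ℕ, G q := by
        congr 1
        exact (Equiv.prodComm ℕ ℕ).tsum_eq G
    _ ≤ 2 * Real.exp (-2 * ν) *
          ((∑' j : ℕ, Real.exp (((j : ℝ) + 1) * ν) * a (j + 1)) *
            (∑' m : ℕ, ((m : ℝ) + 1) * Real.exp (((m : ℝ) + 1) * ν) * a (m + 1))) :=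
        mul_le_mul_of_nonneg_left hGtsum_le (by positivity)
    _ = _ := by ring
end
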